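/- Let pₙ/qₙ denote the nth convergent of the regular continued fraction expansion of e. Then ∑_{n≥0} |qₙ·e − pₙ| = (e/4) · (−1 + 10 · ∑_{n≥0} (−1)ⁿ / ((n+1)! · (2n² + 7n + 3))). -/

import Mathlib

open Real

/-- The numerator `pₙ` of the `n`th convergent of the regular continued fraction of `α`. -/
noncomputable def cfNum (α : ℝ) (n : ℕ) : ℝ := (GenContFract.of α).nums n

/-- The denominator `qₙ` of the `n`th convergent of the regular continued fraction of `α`. -/
noncomputable def cfDen (α : ℝ) (n : ℕ) : ℝ := (GenContFract.of α).dens n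

open MeasureTheory intervalIntegral Set


noncomputable def II (m k : ℕ) : ℝ := ∫ x in (0:ℝ)..1, x ^ m * (1 - x) ^ k * Real.exp x

lemma II_cont (m k : ℕ) : Continuous (fun x : ℝ => x ^ m * (1 - x) ^ k * Real.exp x) := by
  fun_prop

lemma II_intble (m k : ℕ) : IntervalIntegrable
    (fun x : ℝ => x ^ m * (1 - x) ^ k * Real.exp x) volume 0 1 :=
  (II_cont m k).intervalIntegrable _ _

lemma II_split (m k : ℕ) : II m k = II (m + 1) k + II m (k + 1) := by
  rw [II, II, II, ← integral_add (II_intble _ _) (II_intble _ _)]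
  apply integral_congr
  intro x _
  ring

lemma II_pos (m k : ℕ) : 0 < II m k := by
  apply intervalIntegral_pos_of_pos_on (II_intble m k) _ one_pos
  intro x hx
  have h1 : 0 < x := hx.1
  have h2 : 0 < 1 - x := by linarith [hx.2]
  positivity

lemma II_IBP (m k : ℕ) :
    ((m : ℝ) + 1) * II m (k + 1) = ((k : ℝ) + 1) * II (m + 1) k - II (m + 1) (k + 1) := by
  have key : ∀ x ∈ Set.uIcc (0:ℝ) 1, HasDerivAt
      (fun x : ℝ => x ^ (m + 1) * (1 - x) ^ (k + 1) * Real.exp x)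
      ((((m:ℝ)+1) * x ^ m * (1 - x) ^ (k+1) - ((k:ℝ)+1) * x ^ (m+1) * (1-x)^k
        + x ^ (m+1) * (1-x)^(k+1)) * Real.exp x) x := by
    intro x _
    have h1 : HasDerivAt (fun x : ℝ => x ^ (m + 1)) (((m:ℝ)+1) * x ^ m) x := by
      simpa using hasDerivAt_pow (m+1) x
    have h2 : HasDerivAt (fun x : ℝ => (1 - x) ^ (k + 1))
        (-(((k:ℝ)+1) * (1 - x) ^ k)) x := by
      have hin : HasDerivAt (fun x : ℝ => 1 - x) (-1) x := by
        simpa using (hasDerivAt_id x).const_sub 1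
      have := (hasDerivAt_pow (k+1) (1-x)).comp x hin
      exact (hin.pow (k+1)).congr_deriv (by simp only [Nat.add_sub_cancel]; push_cast; ring)
    have h3 : HasDerivAt Real.exp (Real.exp x) x := Real.hasDerivAt_exp x
    have := ((h1.mul h2).mul h3)
    exact this.congr_deriv (by simp only [Pi.mul_apply]; ring)
  have h0 : (∫ x in (0:ℝ)..1,
      ((((m:ℝ)+1) * x ^ m * (1 - x) ^ (k+1) - ((k:ℝ)+1) * x ^ (m+1) * (1-x)^k
        + x ^ (m+1) * (1-x)^(k+1)) * Real.exp x))
      = (1:ℝ) ^ (m+1) * (1 - 1) ^ (k+1) * Real.exp 1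
        - (0:ℝ) ^ (m+1) * (1 - 0) ^ (k+1) * Real.exp 0 := by
    apply integral_eq_sub_of_hasDerivAt key
    apply Continuous.intervalIntegrable
    fun_prop
  have hsimp : (1:ℝ) ^ (m+1) * (1 - 1) ^ (k+1) * Real.exp 1
      - (0:ℝ) ^ (m+1) * (1 - 0) ^ (k+1) * Real.exp 0 = 0 := by
    simp [zero_pow (Nat.succ_ne_zero m)]
  rw [hsimp] at h0
  have hexp : (∫ x in (0:ℝ)..1,
      ((((m:ℝ)+1) * x ^ m * (1 - x) ^ (k+1) - ((k:ℝ)+1) * x ^ (m+1) * (1-x)^k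
        + x ^ (m+1) * (1-x)^(k+1)) * Real.exp x))
      = ((m:ℝ)+1) * II m (k+1) - ((k:ℝ)+1) * II (m+1) k + II (m+1) (k+1) := by
    rw [II, II, II, ← intervalIntegral.integral_const_mul, ← intervalIntegral.integral_const_mul,
      ← integral_sub ((II_intble m (k+1)).const_mul _) ((II_intble (m+1) k).const_mul _),
      ← integral_add (((II_intble m (k+1)).const_mul _).sub ((II_intble (m+1) k).const_mul _))
        (II_intble (m+1) (k+1))]
    apply integral_congr; intro x _; ring
  rw [hexp] at h0
  linarith

lemma II_00 : II 0 0 = Real.exp 1 - 1 := by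
  rw [II]
  simp [integral_exp]

lemma II_10 : II 1 0 = 1 := by
  have key : ∀ x ∈ Set.uIcc (0:ℝ) 1, HasDerivAt
      (fun x : ℝ => (x - 1) * Real.exp x) (x ^ 1 * (1 - x) ^ 0 * Real.exp x) x := by
    intro x _
    have h1 : HasDerivAt (fun x : ℝ => x - 1) 1 x := by
      simpa using (hasDerivAt_id x).sub_const 1
    have := h1.mul (Real.hasDerivAt_exp x)
    exact this.congr_deriv (by ring)
  have h0 := integral_eq_sub_of_hasDerivAt key ((II_cont 1 0).intervalIntegrable _ _)
  rw [II, h0]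
  simp

noncomputable def AA (m : ℕ) : ℝ := II m m / m.factorial
noncomputable def BB (m : ℕ) : ℝ := II (m + 1) m / m.factorial
noncomputable def CC (m : ℕ) : ℝ := II m (m + 1) / m.factorial

lemma fact_pos' (m : ℕ) : (0:ℝ) < m.factorial := by
  exact_mod_cast m.factorial_pos

lemma fact_succ' (m : ℕ) : ((m+1).factorial : ℝ) = ((m:ℝ)+1) * m.factorial := by
  push_cast [Nat.factorial_succ]; ring

lemma AA_pos (m : ℕ) : 0 < AA m := div_pos (II_pos _ _) (fact_pos' m)
lemma BB_pos (m : ℕ) : 0 < BB m := div_pos (II_pos _ _) (fact_pos' m)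
lemma CC_pos (m : ℕ) : 0 < CC m := div_pos (II_pos _ _) (fact_pos' m)

/-- R3 -/
lemma AA_eq (m : ℕ) : AA m = BB m + CC m := by
  rw [AA, BB, CC, II_split m m, add_div]

/-- R1 -/
lemma BB_eq (m : ℕ) : BB m = CC m + AA (m + 1) := by
  have h := II_IBP m m
  have hA : AA (m + 1) = (II (m + 1) m - II m (m + 1)) / m.factorial := by
    rw [AA, fact_succ', div_eq_div_iff (by positivity) (fact_pos' m).ne']
    linear_combination (↑m.factorial : ℝ) * h
  rw [BB, CC, hA]
  ring

/-- R2 -/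
lemma CC_eq (m : ℕ) : CC m = 2 * ((m:ℝ) + 1) * AA (m + 1) + BB (m + 1) := by
  have ibp := II_IBP m (m + 1)
  have s1 := II_split m (m + 1)
  have s2 := II_split (m + 1) (m + 1)
  push_cast at ibp
  have key : II m (m + 1) * ((m+1).factorial : ℝ)
      = (2 * ((m:ℝ) + 1) * II (m+1) (m+1) + II (m+2) (m+1)) * m.factorial := by
    rw [fact_succ']
    linear_combination (↑m.factorial : ℝ) * (((m:ℝ)+1) * s1 + ibp + s2)
  rw [CC, AA, BB]
  rw [div_eq_iff (fact_pos' m).ne']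
  have h2 : ((m+1).factorial : ℝ) ≠ 0 := (fact_pos' _).ne'
  field_simp
  linear_combination key

lemma CC_0 : CC 0 = Real.exp 1 - 2 := by
  have h := II_split 0 0
  rw [CC]
  rw [II_00, II_10] at h
  simp only [Nat.factorial_zero, Nat.cast_one, div_one]
  linarith

lemma BB_0 : BB 0 = 1 := by
  rw [BB]; simp [II_10]

lemma AA_1 : AA 1 = 3 - Real.exp 1 := by
  have h := BB_eq 0
  rw [CC_0, BB_0] at h
  linarith

-- upper bounds for summability
lemma II_mono_m (m k : ℕ) : II (m + 1) k ≤ II m k := by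
  have := II_split m k
  have := II_pos m (k+1)
  linarith

lemma II_mono_k (m k : ℕ) : II m (k + 1) ≤ II m k := by
  have := II_split m k
  have := II_pos (m+1) k
  linarith

lemma II_le0 (k : ℕ) : II 0 k ≤ II 0 0 := by
  induction k with
  | zero => exact le_rfl
  | succ n ih => exact le_trans (II_mono_k 0 n) ih

lemma II_le (m k : ℕ) : II m k ≤ II 0 0 := by
  have h1 : II m k ≤ II 0 k := by
    induction m with
    | zero => exact le_rfl
    | succ n ih => exact le_trans (II_mono_m n k) ih
  exact h1.trans (II_le0 k)

lemma II_le' (m k : ℕ) : II m k ≤ Real.exp 1 - 1 := by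
  have := II_le m k
  rwa [II_00] at this

lemma AA_le (m : ℕ) : AA m ≤ (Real.exp 1 - 1) / m.factorial :=
  (div_le_div_iff_of_pos_right (fact_pos' m)).mpr (II_le' m m)
lemma BB_le (m : ℕ) : BB m ≤ (Real.exp 1 - 1) / m.factorial :=
  (div_le_div_iff_of_pos_right (fact_pos' m)).mpr (II_le' _ _)
lemma CC_le (m : ℕ) : CC m ≤ (Real.exp 1 - 1) / m.factorial :=
  (div_le_div_iff_of_pos_right (fact_pos' m)).mpr (II_le' _ _)

def cfA : ℕ → ℤ := fun n =>
  if n = 0 then 2 else if n % 3 = 2 then 2 * ((n / 3 : ℕ) : ℤ) + 2 else 1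

noncomputable def bb : ℕ → ℝ := fun n =>
  if n = 0 then 1
  else if n % 3 = 1 then CC (n / 3)
  else if n % 3 = 2 then AA (n / 3 + 1)
  else BB (n / 3)

lemma bb_zero : bb 0 = 1 := rfl

lemma bb_3k1 (k : ℕ) : bb (3 * k + 1) = CC k := by
  have h1 : (3 * k + 1) % 3 = 1 := by omega
  have h2 : (3 * k + 1) / 3 = k := by omega
  simp [bb, h1, h2]

lemma bb_3k2 (k : ℕ) : bb (3 * k + 2) = AA (k + 1) := by
  have h1 : (3 * k + 2) % 3 = 2 := by omega
  have h2 : (3 * k + 2) / 3 = k := by omega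
  simp [bb, h1, h2]

lemma bb_3k3 (k : ℕ) : bb (3 * k + 3) = BB (k + 1) := by
  have h1 : (3 * k + 3) % 3 = 0 := by omega
  have h2 : (3 * k + 3) / 3 = k + 1 := by omega
  simp [bb, h1, h2]

lemma cfA_zero : cfA 0 = 2 := rfl

lemma cfA_3k1 (k : ℕ) : cfA (3 * k + 1) = 1 := by
  have h1 : (3 * k + 1) % 3 = 1 := by omega
  simp [cfA, h1]

lemma cfA_3k2 (k : ℕ) : cfA (3 * k + 2) = 2 * ((k : ℤ) + 1) := by
  have h1 : (3 * k + 2) % 3 = 2 := by omega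
  have h2 : (3 * k + 2) / 3 = k := by omega
  simp only [cfA, h1, h2, if_false, if_true, Nat.add_eq_zero, and_false, if_neg (by omega : ¬ 3 * k + 2 = 0)]
  norm_num
  ring

lemma cfA_3k3 (k : ℕ) : cfA (3 * k + 3) = 1 := by
  have h1 : (3 * k + 3) % 3 = 0 := by omega
  simp [cfA, h1]

lemma bb_pos (n : ℕ) : 0 < bb n := by
  rcases n with _ | n
  · norm_num [bb_zero]
  · obtain ⟨k, hk⟩ : ∃ k, n + 1 = 3 * k + 1 ∨ n + 1 = 3 * k + 2 ∨ n + 1 = 3 * k + 3 :=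
      ⟨n / 3, by omega⟩
    rcases hk with h | h | h <;> rw [h]
    · rw [bb_3k1]; exact CC_pos k
    · rw [bb_3k2]; exact AA_pos _
    · rw [bb_3k3]; exact BB_pos _

lemma bb_rec (n : ℕ) : bb n = (cfA (n + 1) : ℝ) * bb (n + 1) + bb (n + 2) := by
  rcases n with _ | n
  · show bb 0 = (cfA (3 * 0 + 1) : ℝ) * bb (3 * 0 + 1) + bb (3 * 0 + 2)
    rw [bb_zero, cfA_3k1, bb_3k1, bb_3k2, CC_0, AA_1]
    norm_num
  · obtain ⟨k, hk⟩ : ∃ k, n + 1 = 3 * k + 1 ∨ n + 1 = 3 * k + 2 ∨ n + 1 = 3 * k + 3 :=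
      ⟨n / 3, by omega⟩
    rcases hk with h | h | h <;> rw [h]
    · show bb (3*k+1) = (cfA (3*k+2) : ℝ) * bb (3*k+2) + bb (3*k+3)
      rw [bb_3k1, cfA_3k2, bb_3k2, bb_3k3, CC_eq k]
      push_cast
      ring
    · show bb (3*k+2) = (cfA (3*k+3) : ℝ) * bb (3*k+3) + bb (3*(k+1)+1)
      rw [bb_3k2, cfA_3k3, bb_3k3, bb_3k1, AA_eq (k+1)]
      push_cast
      ring
    · show bb (3*k+3) = (cfA (3*(k+1)+1) : ℝ) * bb (3*(k+1)+1) + bb (3*(k+1)+2)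
      rw [bb_3k3, cfA_3k1, bb_3k1, bb_3k2, BB_eq (k+1)]
      push_cast
      ring

lemma AA_lt_CC (k : ℕ) : AA (k + 1) < CC k := by
  have h := CC_eq k
  have h1 := AA_pos (k + 1)
  have h2 := BB_pos (k + 1)
  have h3 : (0:ℝ) ≤ (k : ℝ) := Nat.cast_nonneg k
  nlinarith

lemma BB_lt_AA (k : ℕ) : BB (k + 1) < AA (k + 1) := by
  have h := AA_eq (k + 1)
  have := CC_pos (k + 1)
  linarith

lemma CC_lt_BB (k : ℕ) : CC (k + 1) < BB (k + 1) := by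
  have h := BB_eq (k + 1)
  have := AA_pos (k + 2)
  linarith

lemma bb_lt (n : ℕ) : bb (n + 2) < bb (n + 1) := by
  obtain ⟨k, hk⟩ : ∃ k, n = 3 * k ∨ n = 3 * k + 1 ∨ n = 3 * k + 2 := ⟨n / 3, by omega⟩
  rcases hk with h | h | h <;> subst h
  · show bb (3*k+2) < bb (3*k+1)
    rw [bb_3k2, bb_3k1]; exact AA_lt_CC k
  · show bb (3*k+3) < bb (3*k+2)
    rw [bb_3k3, bb_3k2]; exact BB_lt_AA k
  · show bb (3*(k+1)+1) < bb (3*k+3)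
    rw [bb_3k1, bb_3k3]; exact CC_lt_BB k

lemma exp_one_lt3 : Real.exp 1 < 3 :=
  lt_trans Real.exp_one_lt_d9 (by norm_num)

lemma exp_one_gt2 : 2 < Real.exp 1 :=
  lt_trans (by norm_num) Real.exp_one_gt_d9

lemma floor_e : ⌊Real.exp 1⌋ = 2 := by
  have h1 : ((2:ℤ):ℝ) ≤ Real.exp 1 := by push_cast; exact exp_one_gt2.le
  have h2 : Real.exp 1 < (2:ℤ) + 1 := by push_cast; linarith [exp_one_lt3]
  exact Int.floor_eq_iff.mpr ⟨h1, h2⟩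

open GenContFract in
theorem stream_e (n : ℕ) : IntFractPair.stream (Real.exp 1) n =
    some ⟨cfA n, bb (n + 1) / bb n⟩ := by
  induction n with
  | zero =>
    rw [IntFractPair.stream_zero]
    congr 1
    rw [IntFractPair.of]
    have : Int.fract (Real.exp 1) = Real.exp 1 - 2 := by
      rw [Int.fract, floor_e]; norm_num
    rw [this, floor_e]
    congr 1
    show Real.exp 1 - 2 = bb (3*0+1) / bb 0
    rw [bb_3k1, bb_zero, CC_0]
    norm_num
  | succ n ih =>
    have hfr : (bb (n + 1) / bb n) ≠ 0 := ne_of_gt (div_pos (bb_pos _) (bb_pos _))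
    have hstep := IntFractPair.stream_succ_of_some ih hfr
    rw [hstep]
    congr 1
    have hx : (bb (n + 1) / bb n)⁻¹ = (cfA (n + 1) : ℝ) + bb (n + 2) / bb (n + 1) := by
      rw [inv_div, bb_rec n, add_div, mul_div_assoc, div_self (bb_pos (n+1)).ne', mul_one]
    have hge : (0:ℝ) ≤ bb (n + 2) / bb (n + 1) := le_of_lt (div_pos (bb_pos _) (bb_pos _))
    have hlt : bb (n + 2) / bb (n + 1) < 1 := (div_lt_one (bb_pos _)).mpr (bb_lt n)
    rw [IntFractPair.of, hx]
    congr 1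
    · rw [Int.floor_intCast_add]
      rw [Int.floor_eq_zero_iff.mpr ⟨hge, hlt⟩]
      ring
    · rw [Int.fract_intCast_add]
      exact Int.fract_eq_self.mpr ⟨hge, hlt⟩

open GenContFract in
lemma of_e_s_get (n : ℕ) : (GenContFract.of (Real.exp 1)).s.get? n
    = some ⟨1, (cfA (n + 1) : ℝ)⟩ :=
  get?_of_eq_some_of_succ_get?_intFractPair_stream (stream_e (n + 1))

open GenContFract in
lemma of_e_h : (GenContFract.of (Real.exp 1)).h = (2 : ℝ) := by
  rw [of_h_eq_floor, floor_e]
  norm_num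

noncomputable def ee (n : ℕ) : ℝ := cfDen (Real.exp 1) n * Real.exp 1 - cfNum (Real.exp 1) n

open GenContFract in
lemma ee_zero : ee 0 = bb 1 := by
  rw [ee, cfDen, cfNum, zeroth_den_eq_one, zeroth_num_eq_h, of_e_h]
  show 1 * Real.exp 1 - 2 = bb (3*0+1)
  rw [bb_3k1, CC_0]
  ring

open GenContFract in
lemma ee_one : ee 1 = -bb 2 := by
  rw [ee, cfDen, cfNum, first_den_eq (of_e_s_get 0), first_num_eq (of_e_s_get 0), of_e_h]
  show (cfA (3*0+1) : ℝ) * Real.exp 1 - ((cfA (3*0+1) : ℝ) * 2 + 1) = - bb (3*0+2)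
  rw [cfA_3k1, bb_3k2, AA_1]
  push_cast
  ring

open GenContFract in
lemma ee_rec (n : ℕ) : ee (n + 2) = (cfA (n + 2) : ℝ) * ee (n + 1) + ee n := by
  have hnum := nums_recurrence (g := GenContFract.of (Real.exp 1))
    (of_e_s_get (n + 1)) rfl rfl
  have hden := dens_recurrence (g := GenContFract.of (Real.exp 1))
    (of_e_s_get (n + 1)) rfl rfl
  rw [ee, ee, ee, cfNum, cfDen, cfNum, cfDen, cfNum, cfDen, hnum, hden]
  ring

lemma ee_eq (n : ℕ) : ee n = (-1) ^ n * bb (n + 1) := by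
  induction n using Nat.twoStepInduction with
  | zero => simpa using ee_zero
  | one => rw [ee_one]; ring
  | more n ih1 ih2 =>
    rw [ee_rec n, ih1, ih2]
    have h := bb_rec (n + 1)
    rw [h]
    ring

noncomputable def grp (k : ℕ) : ℝ := CC k + AA (k + 1) + BB (k + 1)

lemma exp_one_gt1 : (1:ℝ) < Real.exp 1 := by linarith [exp_one_gt2]

lemma grp_nonneg (k : ℕ) : 0 ≤ grp k :=
  le_of_lt (by have := CC_pos k; have := AA_pos (k+1); have := BB_pos (k+1); rw [grp]; linarith)

lemma fact_le_fact_succ (k : ℕ) : ((k.factorial : ℝ)) ≤ ((k+1).factorial : ℝ) := by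
  exact_mod_cast Nat.factorial_le (Nat.le_succ k)

lemma grp_le (k : ℕ) : grp k ≤ 3 * (Real.exp 1 - 1) / k.factorial := by
  have h1 := CC_le k
  have h2 : AA (k+1) ≤ (Real.exp 1 - 1) / k.factorial :=
    (AA_le (k+1)).trans (div_le_div_of_nonneg_left (by linarith [exp_one_gt1]) (fact_pos' k)
      (fact_le_fact_succ k))
  have h3 : BB (k+1) ≤ (Real.exp 1 - 1) / k.factorial :=
    (BB_le (k+1)).trans (div_le_div_of_nonneg_left (by linarith [exp_one_gt1]) (fact_pos' k)
      (fact_le_fact_succ k))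
  rw [grp]
  have : 3 * (Real.exp 1 - 1) / k.factorial
      = (Real.exp 1 - 1) / k.factorial + (Real.exp 1 - 1) / k.factorial
        + (Real.exp 1 - 1) / k.factorial := by ring
  rw [this]
  gcongr

lemma summable_c_div_fact (c : ℝ) : Summable (fun k : ℕ => c / k.factorial) := by
  have := (Real.summable_pow_div_factorial 1).mul_left c
  simpa [div_eq_mul_inv] using this

lemma grp_summable : Summable grp :=
  Summable.of_nonneg_of_le grp_nonneg grp_le (summable_c_div_fact _)

noncomputable def fP : ℕ × Fin 3 → ℝ := fun p => bb ((Nat.divModEquiv 3).symm p + 1)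

lemma fP_eq (k : ℕ) (r : Fin 3) : fP (k, r) = bb (k * 3 + r + 1) := rfl

lemma fP_fiber (k : ℕ) : ∑' r : Fin 3, fP (k, r) = grp k := by
  rw [tsum_fintype, Fin.sum_univ_three]
  rw [fP_eq, fP_eq, fP_eq]
  have e1 : bb (k*3+(0:Fin 3)+1) = CC k := by
    rw [show k*3+(0:Fin 3)+1 = 3*k+1 by simp; ring, bb_3k1]
  have e2 : bb (k*3+(1:Fin 3)+1) = AA (k+1) := by
    rw [show k*3+(1:Fin 3)+1 = 3*k+2 by simp; ring, bb_3k2]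
  have e3 : bb (k*3+(2:Fin 3)+1) = BB (k+1) := by
    rw [show k*3+(2:Fin 3)+1 = 3*k+3 by simp; ring, bb_3k3]
  rw [e1, e2, e3, grp]

lemma fP_summable : Summable fP := by
  rw [summable_prod_of_nonneg (f := fP) (fun p => le_of_lt (bb_pos _))]
  refine ⟨fun k => Summable.of_finite, ?_⟩
  have : (fun k : ℕ => ∑' r : Fin 3, fP (k, r)) = grp := funext fP_fiber
  rw [this]
  exact grp_summable

lemma bb_shift_summable : Summable (fun n => bb (n + 1)) :=
  ((Nat.divModEquiv 3).symm.summable_iff (f := fun n => bb (n+1))).mp fP_summable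

lemma tsum_bb_eq : ∑' n : ℕ, bb (n + 1) = ∑' k : ℕ, grp k := by
  rw [← (Nat.divModEquiv 3).symm.tsum_eq (f := fun n => bb (n+1))]
  show ∑' p : ℕ × Fin 3, fP p = _
  rw [Summable.tsum_prod fP_summable]
  exact tsum_congr fP_fiber

lemma exp_tsum (x : ℝ) : Real.exp x = ∑' n : ℕ, x ^ n / n.factorial := by
  rw [Real.exp_eq_exp_ℝ, NormedSpace.exp_eq_tsum_div]

lemma exp_shift (x : ℝ) : ∑' n : ℕ, x ^ (n + 1) / (n + 1).factorial = Real.exp x - 1 := by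
  have h := exp_tsum x
  rw [Summable.tsum_eq_zero_add (Real.summable_pow_div_factorial x)] at h
  simp only [pow_zero, Nat.factorial_zero, Nat.cast_one] at h
  norm_num at h
  linarith

noncomputable def gg (k : ℕ) (x : ℝ) : ℝ :=
  ((1 - x) * ((x * (1 - x)) ^ k / k.factorial)
    + (1 + x) * ((x * (1 - x)) ^ (k + 1) / (k + 1).factorial)) * Real.exp x

lemma gg_cont (k : ℕ) : Continuous (gg k) := by
  unfold gg; fun_prop

lemma gg_nonneg (k : ℕ) {x : ℝ} (hx : x ∈ Set.Ioc (0:ℝ) 1) : 0 ≤ gg k x := by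
  obtain ⟨h0, h1⟩ := hx
  have hu : 0 ≤ x * (1 - x) := mul_nonneg h0.le (by linarith)
  have e1 : (0:ℝ) ≤ 1 - x := by linarith
  have e2 : (0:ℝ) ≤ 1 + x := by linarith
  unfold gg
  positivity

lemma grp_int (k : ℕ) : grp k = ∫ x in (0:ℝ)..1, gg k x := by
  have hc : CC k = ∫ x in (0:ℝ)..1, x ^ k * (1 - x) ^ (k + 1) * Real.exp x / k.factorial := by
    rw [CC, II, intervalIntegral.integral_div]
  have ha : AA (k+1) = ∫ x in (0:ℝ)..1,
      x ^ (k+1) * (1 - x) ^ (k + 1) * Real.exp x / (k+1).factorial := by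
    rw [AA, II, intervalIntegral.integral_div]
  have hb : BB (k+1) = ∫ x in (0:ℝ)..1,
      x ^ (k+2) * (1 - x) ^ (k + 1) * Real.exp x / (k+1).factorial := by
    rw [BB, II, intervalIntegral.integral_div]
  have i1 : IntervalIntegrable
      (fun x : ℝ => x ^ k * (1 - x) ^ (k + 1) * Real.exp x / k.factorial) volume 0 1 :=
    ((II_cont k (k+1)).div_const _).intervalIntegrable _ _
  have i2 : IntervalIntegrable
      (fun x : ℝ => x ^ (k+1) * (1 - x) ^ (k + 1) * Real.exp x / (k+1).factorial) volume 0 1 :=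
    ((II_cont (k+1) (k+1)).div_const _).intervalIntegrable _ _
  have i3 : IntervalIntegrable
      (fun x : ℝ => x ^ (k+2) * (1 - x) ^ (k + 1) * Real.exp x / (k+1).factorial) volume 0 1 :=
    ((II_cont (k+2) (k+1)).div_const _).intervalIntegrable _ _
  rw [grp, hc, ha, hb, ← intervalIntegral.integral_add i1 i2,
    ← intervalIntegral.integral_add (i1.add i2) i3]
  apply intervalIntegral.integral_congr
  intro x _
  have hf : ((k+1).factorial : ℝ) = ((k:ℝ)+1) * k.factorial := fact_succ' k
  unfold gg
  rw [mul_pow, mul_pow]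
  field_simp
  ring

lemma gg_tsum (x : ℝ) : ∑' k : ℕ, gg k x
    = ((1 - x) * Real.exp (x * (1 - x))
      + (1 + x) * (Real.exp (x * (1 - x)) - 1)) * Real.exp x := by
  set u := x * (1 - x) with hu
  have s0 : Summable (fun k : ℕ => u ^ k / k.factorial) := Real.summable_pow_div_factorial u
  have s0' : Summable (fun k : ℕ => u ^ (k + 1) / (k + 1).factorial) :=
    (summable_nat_add_iff 1).mpr s0
  have s1 : Summable (fun k : ℕ => (1 - x) * (u ^ k / k.factorial)) := s0.mul_left _
  have s2 : Summable (fun k : ℕ => (1 + x) * (u ^ (k + 1) / (k + 1).factorial)) :=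
    s0'.mul_left _
  unfold gg
  rw [← hu, tsum_mul_right, Summable.tsum_add s1 s2, tsum_mul_left, tsum_mul_left,
    exp_shift u, ← exp_tsum u]

lemma integrable_gg (k : ℕ) : MeasureTheory.Integrable (gg k)
    (MeasureTheory.volume.restrict (Set.Ioc (0:ℝ) 1)) := by
  apply Continuous.integrableOn_Ioc (gg_cont k)

lemma norm_int_gg (k : ℕ) :
    (∫ x in Set.Ioc (0:ℝ) 1, ‖gg k x‖) = grp k := by
  have h : ∀ᵐ x ∂(MeasureTheory.volume.restrict (Set.Ioc (0:ℝ) 1)), ‖gg k x‖ = gg k x := by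
    rw [MeasureTheory.ae_restrict_iff' measurableSet_Ioc]
    exact Filter.Eventually.of_forall fun x hx => Real.norm_of_nonneg (gg_nonneg k hx)
  rw [MeasureTheory.integral_congr_ae h, grp_int k,
    intervalIntegral.integral_of_le zero_le_one]

lemma tsum_grp : ∑' k : ℕ, grp k = ∫ x in (0:ℝ)..1,
    ((1 - x) * Real.exp (x * (1 - x))
      + (1 + x) * (Real.exp (x * (1 - x)) - 1)) * Real.exp x := by
  have h1 : ∀ k : ℕ, grp k = ∫ x in Set.Ioc (0:ℝ) 1, gg k x := by
    intro k
    rw [grp_int k, intervalIntegral.integral_of_le zero_le_one]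
  rw [tsum_congr h1]
  rw [MeasureTheory.integral_tsum_of_summable_integral_norm integrable_gg
    (by rw [funext norm_int_gg]; exact grp_summable)]
  rw [intervalIntegral.integral_of_le zero_le_one]
  apply MeasureTheory.integral_congr_ae
  exact Filter.Eventually.of_forall fun x => gg_tsum x

noncomputable def TT : ℝ := ∑' n : ℕ, (-1 : ℝ) ^ n / (n.factorial * (2 * n + 1))

lemma int_one_add_exp : ∫ x in (0:ℝ)..1, (1 + x) * Real.exp x = Real.exp 1 := by
  have key : ∀ x ∈ Set.uIcc (0:ℝ) 1, HasDerivAt (fun x : ℝ => x * Real.exp x)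
      ((1 + x) * Real.exp x) x := by
    intro x _
    have := (hasDerivAt_id x).mul (Real.hasDerivAt_exp x)
    simp only [id_eq, one_mul] at this
    exact this.congr_deriv (by ring)
  rw [intervalIntegral.integral_eq_sub_of_hasDerivAt key
    (Continuous.intervalIntegrable (by fun_prop) _ _)]
  simp

lemma int_exp_sq : ∫ x in (0:ℝ)..1, Real.exp (2 * x - x ^ 2)
    = Real.exp 1 * ∫ x in (0:ℝ)..1, Real.exp (-x ^ 2) := by
  have h1 : ∀ x : ℝ, Real.exp (2 * x - x ^ 2) = Real.exp 1 * Real.exp (-(1 - x) ^ 2) := by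
    intro x
    rw [← Real.exp_add]
    congr 1
    ring
  rw [intervalIntegral.integral_congr (fun x _ => h1 x), intervalIntegral.integral_const_mul]
  congr 1
  have := intervalIntegral.integral_comp_sub_left (a := (0:ℝ)) (b := 1)
    (fun t : ℝ => Real.exp (-t ^ 2)) 1
  norm_num at this
  exact this

lemma tsum_grp_eval : ∑' k : ℕ, grp k
    = 2 * (∫ x in (0:ℝ)..1, Real.exp (-x ^ 2)) * Real.exp 1 - Real.exp 1 := by
  rw [tsum_grp]
  have h1 : ∀ x ∈ Set.uIcc (0:ℝ) 1, ((1 - x) * Real.exp (x * (1 - x))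
      + (1 + x) * (Real.exp (x * (1 - x)) - 1)) * Real.exp x
      = 2 * Real.exp (2 * x - x ^ 2) - (1 + x) * Real.exp x := by
    intro x _
    rw [show 2 * x - x ^ 2 = x * (1 - x) + x by ring, Real.exp_add]
    ring
  rw [intervalIntegral.integral_congr h1]
  rw [intervalIntegral.integral_sub ((Continuous.intervalIntegrable (by fun_prop) _ _))
    ((Continuous.intervalIntegrable (by fun_prop) _ _)),
    intervalIntegral.integral_const_mul, int_one_add_exp, int_exp_sq]
  ring

-- now ∫₀¹ exp(-x²) = TT
noncomputable def hh (n : ℕ) (x : ℝ) : ℝ := (-x ^ 2) ^ n / n.factorial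

lemma hh_int (n : ℕ) : MeasureTheory.Integrable (hh n)
    (MeasureTheory.volume.restrict (Set.Ioc (0:ℝ) 1)) :=
  Continuous.integrableOn_Ioc (by unfold hh; fun_prop)

lemma int_xpow (m : ℕ) : ∫ x in Set.Ioc (0:ℝ) 1, x ^ m = 1 / ((m : ℝ) + 1) := by
  rw [← intervalIntegral.integral_of_le zero_le_one, integral_pow]
  norm_num

lemma hh_norm_int (n : ℕ) : (∫ x in Set.Ioc (0:ℝ) 1, ‖hh n x‖)
    = 1 / ((2 * (n:ℝ) + 1) * n.factorial) := by
  have h : ∀ x : ℝ, ‖hh n x‖ = x ^ (2 * n) * (1 / n.factorial) := by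
    intro x
    rw [hh, norm_div, norm_pow, norm_neg, norm_pow, pow_mul]
    simp [abs_of_nonneg (sq_nonneg x), Real.norm_of_nonneg (le_of_lt (fact_pos' n)),
      div_eq_mul_inv, one_div, sq_abs]
  rw [MeasureTheory.integral_congr_ae (Filter.Eventually.of_forall h),
    MeasureTheory.integral_mul_const, int_xpow]
  push_cast
  try field_simp
  try ring

lemma hh_val (n : ℕ) : (∫ x in Set.Ioc (0:ℝ) 1, hh n x)
    = (-1 : ℝ) ^ n / (n.factorial * (2 * n + 1)) := by
  have h : ∀ x : ℝ, hh n x = (-1 : ℝ)^n / n.factorial * x ^ (2*n) := by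
    intro x
    rw [hh, pow_mul]
    rw [show (-x^2)^n = (-1:ℝ)^n * (x^2)^n by rw [neg_pow]]
    ring
  rw [MeasureTheory.integral_congr_ae (Filter.Eventually.of_forall h),
    MeasureTheory.integral_const_mul, int_xpow]
  push_cast
  try field_simp
  try ring

lemma summable_inv_fact_mul : Summable (fun n : ℕ => 1 / ((2 * (n:ℝ) + 1) * n.factorial)) := by
  apply Summable.of_nonneg_of_le (fun n => by positivity) (fun n => ?_) (summable_c_div_fact 1)
  rw [div_le_div_iff₀ (by positivity) (fact_pos' n)]
  nlinarith [fact_pos' n, Nat.cast_nonneg (α := ℝ) n]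

lemma int_exp_neg_sq : (∫ x in (0:ℝ)..1, Real.exp (-x ^ 2)) = TT := by
  rw [intervalIntegral.integral_of_le zero_le_one]
  have hpt : ∀ x : ℝ, Real.exp (-x ^ 2) = ∑' n : ℕ, hh n x := by
    intro x
    rw [exp_tsum (-x ^ 2)]
    rfl
  rw [MeasureTheory.integral_congr_ae (Filter.Eventually.of_forall hpt)]
  rw [← MeasureTheory.integral_tsum_of_summable_integral_norm hh_int
    (by rw [funext hh_norm_int]; exact summable_inv_fact_mul)]
  rw [TT]
  exact tsum_congr hh_val

lemma summable_of_abs_le_fact (f : ℕ → ℝ) (h : ∀ n, |f n| ≤ 1 / n.factorial) : Summable f := by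
  refine Summable.of_abs ?_
  apply Summable.of_nonneg_of_le (fun n => abs_nonneg _) h
  exact summable_c_div_fact 1

lemma fact_mono (n m : ℕ) (h : n ≤ m) : (n.factorial : ℝ) ≤ m.factorial := by
  exact_mod_cast Nat.factorial_le h

lemma sum_t : Summable (fun n : ℕ => (-1:ℝ)^n / (n.factorial * (2*n+1))) := by
  apply summable_of_abs_le_fact
  intro n
  rw [abs_div, abs_pow, abs_neg, abs_one, one_pow, one_div]
  rw [abs_of_pos (by positivity : (0:ℝ) < n.factorial * (2*n+1))]
  rw [← one_div]
  exact one_div_le_one_div_of_le (fact_pos' n)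
    (by nlinarith [fact_pos' n, Nat.cast_nonneg (α := ℝ) n])

lemma abs_le_fact_aux (n : ℕ) (c : ℝ) (hc : 1 ≤ c) :
    |(-1:ℝ)^n / ((n+1).factorial * c)| ≤ 1 / n.factorial := by
  rw [abs_div, abs_pow, abs_neg, abs_one, one_pow]
  have h1 : (0:ℝ) < (n+1).factorial * c := by
    have := fact_pos' (n+1); nlinarith
  rw [abs_of_pos h1, div_le_div_iff₀ h1 (fact_pos' n)]
  have h2 : (n.factorial : ℝ) ≤ (n+1).factorial := fact_mono n (n+1) (Nat.le_succ n)
  nlinarith [fact_pos' n]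

lemma sum_w : Summable (fun n : ℕ => (-1:ℝ)^n / (n+1).factorial) := by
  apply summable_of_abs_le_fact
  intro n
  have := abs_le_fact_aux n 1 le_rfl
  simpa using this

lemma sum_w0 : Summable (fun n : ℕ => (-1:ℝ)^n / n.factorial) := by
  apply summable_of_abs_le_fact
  intro n
  rw [abs_div, abs_pow, abs_neg, abs_one, one_pow, abs_of_pos (fact_pos' n)]

lemma sum_w2 : Summable (fun n : ℕ => (-1:ℝ)^n / (n+2).factorial) := by
  apply summable_of_abs_le_fact
  intro n
  rw [abs_div, abs_pow, abs_neg, abs_one, one_pow, abs_of_pos (fact_pos' (n+2))]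
  rw [div_le_div_iff₀ (fact_pos' (n+2)) (fact_pos' n)]
  have := fact_mono n (n+2) (by omega)
  nlinarith [fact_pos' n]

lemma sum_w3 : Summable (fun n : ℕ => (-1:ℝ)^n / (n+3).factorial) := by
  apply summable_of_abs_le_fact
  intro n
  rw [abs_div, abs_pow, abs_neg, abs_one, one_pow, abs_of_pos (fact_pos' (n+3))]
  rw [div_le_div_iff₀ (fact_pos' (n+3)) (fact_pos' n)]
  have := fact_mono n (n+3) (by omega)
  nlinarith [fact_pos' n]

lemma sum_u : Summable (fun n : ℕ => (-1:ℝ)^n / ((n+1).factorial * (2*n+1))) := by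
  apply summable_of_abs_le_fact
  intro n
  exact abs_le_fact_aux n _ (by nlinarith [Nat.cast_nonneg (α := ℝ) n])

lemma sum_v : Summable (fun n : ℕ => (-1:ℝ)^n / ((n+1).factorial * (n+3))) := by
  apply summable_of_abs_le_fact
  intro n
  exact abs_le_fact_aux n _ (by nlinarith [Nat.cast_nonneg (α := ℝ) n])

lemma sum_s : Summable (fun n : ℕ =>
    (-1:ℝ)^n / ((n+1).factorial * (2*(n:ℝ)^2 + 7*n + 3))) := by
  apply summable_of_abs_le_fact
  intro n
  exact abs_le_fact_aux n _ (by nlinarith [Nat.cast_nonneg (α := ℝ) n])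

lemma valW : ∑' n : ℕ, (-1:ℝ)^n / (n+1).factorial = 1 - Real.exp (-1) := by
  have h := Summable.tsum_eq_zero_add sum_w0
  rw [← exp_tsum (-1)] at h
  have h2 : ∀ n : ℕ, (-1:ℝ)^(n+1) / (n+1).factorial = -((-1)^n / (n+1).factorial) := by
    intro n; rw [pow_succ]; ring
  rw [tsum_congr h2, tsum_neg] at h
  simp only [pow_zero, Nat.factorial_zero, Nat.cast_one, div_one] at h
  linarith

lemma valW2 : ∑' n : ℕ, (-1:ℝ)^n / (n+2).factorial = Real.exp (-1) := by
  have h := Summable.tsum_eq_zero_add sum_w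
  rw [valW] at h
  have h2 : ∀ n : ℕ, (-1:ℝ)^(n+1) / (n+1+1).factorial = -((-1)^n / (n+2).factorial) := by
    intro n; rw [pow_succ]; norm_num; ring_nf
  rw [tsum_congr h2, tsum_neg] at h
  simp only [pow_zero, Nat.factorial_one, Nat.cast_one, div_one] at h
  norm_num at h
  linarith

lemma valW3 : ∑' n : ℕ, (-1:ℝ)^n / (n+3).factorial = 1/2 - Real.exp (-1) := by
  have h := Summable.tsum_eq_zero_add sum_w2
  rw [valW2] at h
  have h2 : ∀ n : ℕ, (-1:ℝ)^(n+1) / (n+1+2).factorial = -((-1)^n / (n+3).factorial) := by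
    intro n; rw [pow_succ]; norm_num; ring_nf
  rw [tsum_congr h2, tsum_neg] at h
  have h0 : (((0:ℕ)+2).factorial : ℝ) = 2 := by norm_num [Nat.factorial]
  rw [h0] at h
  norm_num at h
  linarith

lemma valU : ∑' n : ℕ, (-1:ℝ)^n / ((n+1).factorial * (2*n+1))
    = 2 * TT - (1 - Real.exp (-1)) := by
  have hterm : ∀ n : ℕ, (-1:ℝ)^n / ((n+1).factorial * (2*n+1))
      = 2 * ((-1)^n / (n.factorial * (2*n+1))) - (-1)^n / (n+1).factorial := by
    intro n
    rw [fact_succ' n]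
    have h1 : ((n:ℝ)+1) ≠ 0 := by positivity
    have h2 : (n.factorial : ℝ) ≠ 0 := (fact_pos' n).ne'
    have h3 : (2*(n:ℝ)+1) ≠ 0 := by positivity
    field_simp
    ring
  rw [tsum_congr hterm, Summable.tsum_sub ((sum_t).mul_left 2) sum_w, tsum_mul_left, valW, TT]

lemma valV : ∑' n : ℕ, (-1:ℝ)^n / ((n+1).factorial * (n+3))
    = 2 * Real.exp (-1) - 1/2 := by
  have hterm : ∀ n : ℕ, (-1:ℝ)^n / ((n+1).factorial * (n+3))
      = (-1)^n / (n+2).factorial - (-1)^n / (n+3).factorial := by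
    intro n
    have e2 : ((n+2).factorial : ℝ) = ((n:ℝ)+2) * (n+1).factorial := by
      rw [show n+2 = (n+1)+1 by ring, fact_succ' (n+1)]; push_cast; ring
    have e3 : ((n+3).factorial : ℝ) = ((n:ℝ)+3) * ((n:ℝ)+2) * (n+1).factorial := by
      rw [show n+3 = (n+2)+1 by ring, fact_succ' (n+2), e2]; push_cast; ring
    rw [e2, e3]
    have h1 : ((n:ℝ)+1) ≠ 0 := by positivity
    have h2 : ((n+1).factorial : ℝ) ≠ 0 := (fact_pos' _).ne'
    have h3 : ((n:ℝ)+2) ≠ 0 := by positivity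
    have h4 : ((n:ℝ)+3) ≠ 0 := by positivity
    field_simp
    ring
  rw [tsum_congr hterm, Summable.tsum_sub sum_w2 sum_w3, valW2, valW3]
  ring

lemma valS : ∑' n : ℕ, (-1:ℝ)^n / ((n+1).factorial * (2*(n:ℝ)^2 + 7*n + 3))
    = (8 * TT - 3) / 10 := by
  have hterm : ∀ n : ℕ, (-1:ℝ)^n / ((n+1).factorial * (2*(n:ℝ)^2 + 7*n + 3))
      = (2 * ((-1)^n / ((n+1).factorial * (2*n+1))) - (-1)^n / ((n+1).factorial * (n+3))) / 5 := by
    intro n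
    have h2 : ((n+1).factorial : ℝ) ≠ 0 := (fact_pos' _).ne'
    have h3 : (2*(n:ℝ)+1) ≠ 0 := by positivity
    have h4 : ((n:ℝ)+3) ≠ 0 := by positivity
    have h5 : (2*(n:ℝ)^2 + 7*n + 3) = (2*(n:ℝ)+1) * ((n:ℝ)+3) := by ring
    rw [h5]
    field_simp
    ring
  rw [tsum_congr hterm]
  rw [tsum_div_const]
  rw [Summable.tsum_sub (sum_u.mul_left 2) sum_v, tsum_mul_left, valU, valV]
  ring

theorem errorSum_e_series_formula :
    (∑' n : ℕ, |cfDen (Real.exp 1) n * Real.exp 1 - cfNum (Real.exp 1) n|) =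
      (Real.exp 1 / 4) *
        (-1 + 10 * ∑' n : ℕ, (-1 : ℝ) ^ n /
          (((n + 1).factorial : ℝ) * (2 * (n : ℝ) ^ 2 + 7 * (n : ℝ) + 3))) := by
  have habs : ∀ n : ℕ, |cfDen (Real.exp 1) n * Real.exp 1 - cfNum (Real.exp 1) n|
      = bb (n + 1) := by
    intro n
    have h := ee_eq n
    simp only [ee] at h
    rw [h, abs_mul, abs_pow, abs_neg, abs_one, one_pow, one_mul, abs_of_pos (bb_pos _)]
  rw [tsum_congr habs, tsum_bb_eq, tsum_grp_eval, int_exp_neg_sq, valS]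
  ring
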